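/- Let H be a Hilbert space with orthogonal decomposition H = H₀ ⊕ Ĥ, and let φ: H → ℝ be a function. Suppose θ: H₀ → Ĥ satisfies φ(u + θ(u)) = inf_{v∈Ĥ} φ(u + v) for all u ∈ H₀. Define φ̄(u) = φ(u + θ(u)). Then for all u, h ∈ H₀: φ̄(u+h) − φ̄(u) ≤ φ(u+h+θ(u)) − φ(u+θ(u)) and φ̄(u) − φ̄(u+h) ≤ φ(u+θ(u+h)) − φ(u+h+θ(u+h)). Consequently, if φ is locally Lipschitz and θ is continuous, then φ̄ is locally Lipschitz. -/

import Mathlib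

open Filter Topology

/-- Properties of the reduced functional `φ̄(u) = φ(u + θ(u))`, where `θ`
selects minimizers in the fibers `u + Ĥ`: the two elementary inequalities and,
when `φ` is locally Lipschitz and `θ` continuous, the local Lipschitz property
of `φ̄`. -/
theorem reduced_functional_locallyLipschitz {H : Type*} [NormedAddCommGroup H]
    [InnerProductSpace ℝ H] [CompleteSpace H]
    (H₀ Hhat : Submodule ℝ H)
    (horth : ∀ u ∈ H₀, ∀ v ∈ Hhat, inner ℝ u v = (0 : ℝ))
    (hcompl : ∀ x : H, ∃ u ∈ H₀, ∃ v ∈ Hhat, x = u + v)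
    (φ : H → ℝ) (hφ : LocallyLipschitz φ)
    (θ : H₀ → Hhat) (hθc : Continuous θ)
    (hθmin : ∀ (u : H₀) (v : Hhat), φ ((u : H) + (θ u : H)) ≤ φ ((u : H) + (v : H))) :
    (∀ u h : H₀,
      φ (((u + h : H₀) : H) + (θ (u + h) : H)) - φ ((u : H) + (θ u : H)) ≤
        φ (((u + h : H₀) : H) + (θ u : H)) - φ ((u : H) + (θ u : H))) ∧
    (∀ u h : H₀,
      φ ((u : H) + (θ u : H)) - φ (((u + h : H₀) : H) + (θ (u + h) : H)) ≤
        φ ((u : H) + (θ (u + h) : H)) - φ (((u + h : H₀) : H) + (θ (u + h) : H))) ∧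
    LocallyLipschitz (fun u : H₀ => φ ((u : H) + (θ u : H))) := by
  refine ⟨fun u h => by linarith [hθmin (u + h) (θ u)],
    fun u h => by linarith [hθmin u (θ (u + h))], ?_⟩
  intro u₀
  obtain ⟨K, t, ht, hK⟩ := hφ ((u₀ : H) + (θ u₀ : H))
  have hKint : LipschitzOnWith K φ (interior t) := hK.mono interior_subset
  -- the map (u, w) ↦ u + θ w is continuous
  have hg : Continuous fun p : H₀ × H₀ => (p.1 : H) + (θ p.2 : H) := by
    exact (continuous_subtype_val.comp continuous_fst).add
      (continuous_subtype_val.comp (hθc.comp continuous_snd))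
  have hmem : ((u₀, u₀) : H₀ × H₀) ∈
      (fun p : H₀ × H₀ => (p.1 : H) + (θ p.2 : H)) ⁻¹' interior t := by
    exact mem_interior_iff_mem_nhds.mpr ht
  have hopen : IsOpen ((fun p : H₀ × H₀ => (p.1 : H) + (θ p.2 : H)) ⁻¹' interior t) :=
    isOpen_interior.preimage hg
  obtain ⟨V, W, hV, hW, hu₀V, hu₀W, hVW⟩ := isOpen_prod_iff.mp hopen u₀ u₀ hmem
  refine ⟨K, V ∩ W, (hV.inter hW).mem_nhds ⟨hu₀V, hu₀W⟩, ?_⟩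
  rw [lipschitzOnWith_iff_dist_le_mul]
  intro x hx y hy
  have key : ∀ a b : H₀, a ∈ V ∩ W → b ∈ V ∩ W →
      φ ((a : H) + (θ a : H)) - φ ((b : H) + (θ b : H)) ≤ K * dist a b := by
    intro a b ha hb
    have h1 : ((a : H) + (θ b : H)) ∈ interior t := hVW (show (a, b) ∈ V ×ˢ W from ⟨ha.1, hb.2⟩)
    have h2 : ((b : H) + (θ b : H)) ∈ interior t := hVW (show (b, b) ∈ V ×ˢ W from ⟨hb.1, hb.2⟩)
    have hd : dist ((a : H) + (θ b : H)) ((b : H) + (θ b : H)) = dist a b := by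
      rw [Subtype.dist_eq]
      simp [dist_eq_norm]
    have hle : dist (φ ((a : H) + (θ b : H))) (φ ((b : H) + (θ b : H))) ≤
        K * dist a b := by
      rw [← hd]
      exact hKint.dist_le_mul _ h1 _ h2
    have hmin : φ ((a : H) + (θ a : H)) ≤ φ ((a : H) + (θ b : H)) := hθmin a (θ b)
    calc φ ((a : H) + (θ a : H)) - φ ((b : H) + (θ b : H))
        ≤ φ ((a : H) + (θ b : H)) - φ ((b : H) + (θ b : H)) := by linarith
      _ ≤ |φ ((a : H) + (θ b : H)) - φ ((b : H) + (θ b : H))| := le_abs_self _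
      _ ≤ K * dist a b := by rwa [← Real.dist_eq]
  rw [Real.dist_eq, abs_sub_le_iff]
  constructor
  · exact key x y hx hy
  · have := key y x hy hx
    rwa [dist_comm] at this
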